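/- Let V be a commutative unital quantale and Φ a class of V-distributors satisfying (Ax1)–(Ax3). For every V-category X and every Φ-cocomplete V-category Y, composition with y^Φ_X : X → ΦX defines an equivalence of ordered sets between the Φ-cocontinuous V-functors ΦX → Y and the V-functors X → Y: (a) for every V-functor f : X → Y there exists a Φ-cocontinuous V-functor g : ΦX → Y with g ∘ y^Φ_X ≅ f; and (b) for Φ-cocontinuous V-functors g, g' : ΦX → Y, g ≤ g' if and only if g ∘ y^Φ_X ≤ g' ∘ y^Φ_X. -/
import Mathlib


universe u

/-- A commutative unital quantale: a complete lattice with a commutative monoid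
structure whose multiplication distributes over arbitrary suprema. -/
class CommQuantale (V : Type u) extends CompleteLattice V, CommMonoid V where
  mul_sSup : ∀ (x : V) (s : Set V), x * sSup s = ⨆ v ∈ s, x * v

variable {V : Type u} [CommQuantale V]

/-- The internal hom of the quantale: `qhom u v = sSup {w | u * w ≤ v}`. -/
def qhom (u v : V) : V := sSup {w | u * w ≤ v}

theorem mul_iSup' {ι : Sort*} (u : V) (v : ι → V) : u * (⨆ i, v i) = ⨆ i, u * v i := by
  rw [iSup, CommQuantale.mul_sSup, iSup_range]

theorem mul_mono_right' (u : V) {w w' : V} (h : w ≤ w') : u * w ≤ u * w' := by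
  have hs : sSup ({w, w'} : Set V) = w' := by
    apply le_antisymm
    · exact sSup_le (by rintro x (rfl | rfl); exacts [h, le_rfl])
    · exact le_sSup (by simp)
  have hm := CommQuantale.mul_sSup u ({w, w'} : Set V)
  rw [hs] at hm
  rw [hm]
  exact le_iSup₂ (f := fun v (_ : v ∈ ({w, w'} : Set V)) => u * v) w (by simp)

theorem mul_mono_left' {w w' : V} (h : w ≤ w') (u : V) : w * u ≤ w' * u := by
  rw [mul_comm w u, mul_comm w' u]; exact mul_mono_right' u h

theorem le_qhom_iff {u v w : V} : w ≤ qhom u v ↔ u * w ≤ v := by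
  constructor
  · intro h
    have h2 : u * qhom u v ≤ v := by
      rw [qhom, CommQuantale.mul_sSup]
      exact iSup₂_le fun w hw => hw
    exact le_trans (mul_mono_right' u h) h2
  · intro h; exact le_sSup h

theorem bot_mul' (u : V) : (⊥ : V) * u = ⊥ := by
  rw [mul_comm]
  have hm := CommQuantale.mul_sSup u (∅ : Set V)
  simpa using hm

/-- A `V`-category structure on `X`. -/
structure VCatStr (V : Type u) [CommQuantale V] (X : Type u) where
  hom : X → X → V
  refl : ∀ x, (1 : V) ≤ hom x x
  comp : ∀ x y z, hom x y * hom y z ≤ hom x z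

/-- `V`-functoriality. -/
def IsVFunctor {X Y : Type u} (a : VCatStr V X) (b : VCatStr V Y) (f : X → Y) : Prop :=
  ∀ x x', a.hom x x' ≤ b.hom (f x) (f x')

/-- `φ` is a `V`-distributor `(X,a) ⇸ (Y,b)`. -/
def IsDist {X Y : Type u} (a : VCatStr V X) (b : VCatStr V Y) (φ : X → Y → V) : Prop :=
  (∀ x' x y, a.hom x' x * φ x y ≤ φ x' y) ∧ (∀ x y y', φ x y * b.hom y y' ≤ φ x y')

/-- Composite `ψ ∘ φ` of distributors (`φ` first). -/
def dComp {X Y Z : Type u} (ψ : Y → Z → V) (φ : X → Y → V) : X → Z → V :=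
  fun x z => ⨆ y, φ x y * ψ y z

/-- The extension `γ ⟜ α`. -/
def dExt {X Y Z : Type u} (γ : X → Z → V) (α : X → Y → V) : Y → Z → V :=
  fun y z => ⨅ x, qhom (α x y) (γ x z)

/-- `f_*`. -/
def fStar {X Y : Type u} (b : VCatStr V Y) (f : X → Y) : X → Y → V :=
  fun x y => b.hom (f x) y

/-- `f^*`. -/
def fCostar {X Y : Type u} (b : VCatStr V Y) (f : X → Y) : Y → X → V :=
  fun y x => b.hom y (f x)

/-- `ψ ⊣ φ` is an adjunction of distributors, `ψ : (A,α) ⇸ (B,β)`, `φ : (B,β) ⇸ (A,α)`. -/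
def DistAdj {A B : Type u} (α : VCatStr V A) (β : VCatStr V B)
    (ψ : A → B → V) (φ : B → A → V) : Prop :=
  (∀ x x', α.hom x x' ≤ ⨆ y, ψ x y * φ y x') ∧
  (∀ y y', (⨆ x, φ y x * ψ x y') ≤ β.hom y y')

/-- `φ : (B,β) ⇸ (A,α)` is a right adjoint distributor. -/
def IsRightAdjDist {A B : Type u} (β : VCatStr V B) (α : VCatStr V A) (φ : B → A → V) : Prop :=
  ∃ ψ : A → B → V, IsDist α β ψ ∧ DistAdj α β ψ φ

/-- The pointwise order on `V`-functors. -/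
def VLe {X Y : Type u} (b : VCatStr V Y) (f g : X → Y) : Prop :=
  ∀ x, (1 : V) ≤ b.hom (f x) (g x)

/-- Equivalence of `V`-functors. -/
def VEquiv {X Y : Type u} (b : VCatStr V Y) (f g : X → Y) : Prop :=
  VLe b f g ∧ VLe b g f

def FullyFaithful {X Y : Type u} (a : VCatStr V X) (b : VCatStr V Y) (f : X → Y) : Prop :=
  ∀ x x', b.hom (f x) (f x') = a.hom x x'

def DenseF {X Y : Type u} (b : VCatStr V Y) (f : X → Y) : Prop :=
  ∀ y y', (⨆ x, b.hom y (f x) * b.hom (f x) y') = b.hom y y'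

/-- `f` is a left adjoint `V`-functor. -/
def LeftAdjointF {X Y : Type u} (a : VCatStr V X) (b : VCatStr V Y) (f : X → Y) : Prop :=
  ∃ g : Y → X, IsVFunctor b a g ∧ (∀ x, (1 : V) ≤ a.hom x (g (f x))) ∧
    (∀ y, (1 : V) ≤ b.hom (f (g y)) y)

/-- The one-point `V`-category `G`. -/
def unitCat (V : Type u) [CommQuantale V] : VCatStr V PUnit where
  hom _ _ := 1
  refl _ := le_refl 1
  comp _ _ _ := (one_mul 1).le

/-- Presheaves on `(X,a)`: distributors `(X,a) ⇸ G`. -/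
def IsPresheaf {X : Type u} (a : VCatStr V X) (ψ : X → V) : Prop :=
  ∀ x' x, a.hom x' x * ψ x ≤ ψ x'

/-- A class of `V`-distributors: for each pair of `V`-categories a predicate on maps. -/
def DistClass (V : Type u) [CommQuantale V] : Type (u + 1) :=
  ∀ ⦃X Y : Type u⦄, VCatStr V X → VCatStr V Y → (X → Y → V) → Prop

/-- The presheaf `ψ`, seen as distributor into `G`, lies in `Φ`. -/
def InPhi (Φ : DistClass V) {X : Type u} (a : VCatStr V X) (ψ : X → V) : Prop :=
  Φ a (unitCat V) (fun x _ => ψ x)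

/-- Axioms (Ax1)–(Ax3) on a class of distributors. -/
structure DistAx (Φ : DistClass V) : Prop where
  ax1 : ∀ {X Y : Type u} (a : VCatStr V X) (b : VCatStr V Y) (f : X → Y),
      IsVFunctor a b f → Φ b a (fCostar b f)
  ax2_left : ∀ {W X Y : Type u} (d : VCatStr V W) (a : VCatStr V X) (b : VCatStr V Y)
      (φ : W → Y → V) (f : X → Y), IsDist d b φ → IsVFunctor a b f → Φ d b φ →
      Φ d a (dComp (fCostar b f) φ)
  ax2_right : ∀ {X Y Z : Type u} (a : VCatStr V X) (b : VCatStr V Y) (c : VCatStr V Z)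
      (φ : X → Z → V) (f : X → Y), IsDist a c φ → IsVFunctor a b f → Φ a c φ →
      Φ b c (dComp φ (fCostar b f))
  ax2_star : ∀ {W X Z : Type u} (d : VCatStr V W) (a : VCatStr V X) (c : VCatStr V Z)
      (φ : X → Z → V) (f : W → X), IsDist a c φ → IsVFunctor d a f → Φ a c φ →
      Φ d a (fStar a f) → Φ d c (dComp φ (fStar a f))
  ax3 : ∀ {X Y : Type u} (a : VCatStr V X) (b : VCatStr V Y) (φ : X → Y → V),
      IsDist a b φ → (∀ y, Φ a (unitCat V) (fun x _ => φ x y)) → Φ a b φ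

/-- Axiom (Ax4): `f_* ∈ Φ` for every surjective `V`-functor `f`. -/
def Ax4 (Φ : DistClass V) : Prop :=
  ∀ {X Y : Type u} (a : VCatStr V X) (b : VCatStr V Y) (f : X → Y),
    IsVFunctor a b f → Function.Surjective f → Φ a b (fStar b f)

/-- `f` is `Φ`-dense. -/
def PhiDense (Φ : DistClass V) {X Y : Type u} (a : VCatStr V X) (b : VCatStr V Y)
    (f : X → Y) : Prop :=
  Φ a b (fStar b f)

/-- The `V`-category structure on `X → V`. -/
def funCat (V : Type u) [CommQuantale V] (X : Type u) : VCatStr V (X → V) where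
  hom ψ ψ' := ⨅ x, qhom (ψ x) (ψ' x)
  refl ψ := le_iInf fun x => le_qhom_iff.mpr (mul_one _).le
  comp ψ χ ω := le_iInf fun x => le_qhom_iff.mpr <| by
    calc ψ x * ((⨅ x', qhom (ψ x') (χ x')) * (⨅ x', qhom (χ x') (ω x')))
        = (ψ x * (⨅ x', qhom (ψ x') (χ x'))) * (⨅ x', qhom (χ x') (ω x')) :=
          (mul_assoc _ _ _).symm
      _ ≤ χ x * (⨅ x', qhom (χ x') (ω x')) :=
          mul_mono_left' (le_qhom_iff.mp (iInf_le (fun x' => qhom (ψ x') (χ x')) x)) _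
      _ ≤ ω x := le_qhom_iff.mp (iInf_le (fun x' => qhom (χ x') (ω x')) x)

/-- Full sub-`V`-category on a predicate. -/
def subCat {X : Type u} (a : VCatStr V X) (P : X → Prop) : VCatStr V {x : X // P x} where
  hom x y := a.hom x.1 y.1
  refl x := a.refl x.1
  comp x y z := a.comp x.1 y.1 z.1

/-- Carrier of the presheaf `V`-category `PX`. -/
def PCarrier {X : Type u} (a : VCatStr V X) : Type u := {ψ : X → V // IsPresheaf a ψ}

/-- The presheaf `V`-category `PX`. -/
def pCat {X : Type u} (a : VCatStr V X) : VCatStr V (PCarrier a) :=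
  subCat (funCat V X) (IsPresheaf a)

/-- Carrier of `ΦX`: presheaves lying in `Φ`. -/
def PhiCarrier (Φ : DistClass V) {X : Type u} (a : VCatStr V X) : Type u :=
  {ψ : X → V // IsPresheaf a ψ ∧ InPhi Φ a ψ}

/-- The `V`-category `ΦX`. -/
def phiCat (Φ : DistClass V) {X : Type u} (a : VCatStr V X) : VCatStr V (PhiCarrier Φ a) :=
  subCat (funCat V X) fun ψ => IsPresheaf a ψ ∧ InPhi Φ a ψ

/-- The inclusion `ΦX → PX`. -/
def phiIncl (Φ : DistClass V) {X : Type u} (a : VCatStr V X) : PhiCarrier Φ a → PCarrier a :=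
  fun ψ => ⟨ψ.1, ψ.2.1⟩

/-- The corestricted Yoneda functor `y^Φ_X : X → ΦX`. -/
def yPhi (Φ : DistClass V) (hΦ : DistAx Φ) {X : Type u} (a : VCatStr V X) (x : X) :
    PhiCarrier Φ a :=
  ⟨fun x' => a.hom x' x,
   fun x' x'' => a.comp x' x'' x,
   hΦ.ax1 (unitCat V) a (fun _ => x) (fun _ _ => a.refl x)⟩

/-- `Φf : ΦX → ΦY`, `ψ ↦ ψ ∘ f^*`. -/
def phiMap (Φ : DistClass V) (hΦ : DistAx Φ) {X Y : Type u} (a : VCatStr V X) (b : VCatStr V Y)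
    (f : X → Y) (hf : IsVFunctor a b f) (ψ : PhiCarrier Φ a) : PhiCarrier Φ b :=
  ⟨fun y => ⨆ x, b.hom y (f x) * ψ.1 x,
   by
    intro y' y
    rw [mul_iSup']
    refine iSup_le fun x => ?_
    refine le_trans ?_ (le_iSup _ x)
    calc b.hom y' y * (b.hom y (f x) * ψ.1 x)
        = (b.hom y' y * b.hom y (f x)) * ψ.1 x := (mul_assoc _ _ _).symm
      _ ≤ b.hom y' (f x) * ψ.1 x := mul_mono_left' (b.comp y' y (f x)) _,
   by
    have hd : IsDist a (unitCat V) (fun x (_ : PUnit) => ψ.1 x) :=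
      ⟨fun x' x _ => ψ.2.1 x' x, fun x _ _ => le_of_eq (mul_one _)⟩
    exact hΦ.ax2_right a b (unitCat V) _ f hd hf ψ.2.2⟩

/-- `g` is the `φ`-weighted colimit of `h`, i.e. `g_* = h_* ⟜ φ`. -/
def IsColimit {Y Z X : Type u} (_b : VCatStr V Y) (_c : VCatStr V Z) (a : VCatStr V X)
    (φ : Y → Z → V) (h : Y → X) (g : Z → X) : Prop :=
  ∀ z x, a.hom (g z) x = ⨅ y, qhom (φ y z) (a.hom (h y) x)

/-- `Φ`-cocompleteness. -/
def PhiCocomplete (Φ : DistClass V) {X : Type u} (a : VCatStr V X) : Prop :=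
  ∀ ⦃Y Z : Type u⦄ (b : VCatStr V Y) (c : VCatStr V Z) (φ : Y → Z → V) (h : Y → X),
    IsDist b c φ → Φ b c φ → IsVFunctor b a h →
    ∃ g : Z → X, IsVFunctor c a g ∧ IsColimit b c a φ h g

/-- `Φ`-cocontinuity. -/
def PhiCocontinuous (Φ : DistClass V) {X X' : Type u} (a : VCatStr V X) (a' : VCatStr V X')
    (f : X → X') : Prop :=
  ∀ ⦃Y Z : Type u⦄ (b : VCatStr V Y) (c : VCatStr V Z) (φ : Y → Z → V) (h : Y → X) (g : Z → X),
    IsDist b c φ → Φ b c φ → IsVFunctor b a h → IsVFunctor c a g →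
    IsColimit b c a φ h g → IsColimit b c a' φ (f ∘ h) (f ∘ g)

/-- `Φ`-injectivity. -/
def PhiInjective (Φ : DistClass V) {X : Type u} (a : VCatStr V X) : Prop :=
  ∀ ⦃A B : Type u⦄ (α : VCatStr V A) (β : VCatStr V B) (f : A → X) (i : A → B),
    IsVFunctor α a f → IsVFunctor α β i → FullyFaithful α β i → PhiDense Φ α β i →
    ∃ g : B → X, IsVFunctor β a g ∧ VEquiv a (g ∘ i) f

/-- Separatedness. -/
def Separated {X : Type u} (a : VCatStr V X) : Prop :=
  ∀ ⦃Y : Type u⦄ (b : VCatStr V Y) (f g : Y → X),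
    IsVFunctor b a f → IsVFunctor b a g → VEquiv a f g → f = g

/-! ### Auxiliary lemmas -/

theorem mul_le_mul'' {a b c d : V} (h1 : a ≤ b) (h2 : c ≤ d) : a * c ≤ b * d :=
  le_trans (mul_mono_left' h1 c) (mul_mono_right' b h2)

theorem iSup_mul_le_iff {ι : Sort*} {f : ι → V} {t v : V} :
    (⨆ i, f i) * t ≤ v ↔ ∀ i, f i * t ≤ v := by
  rw [mul_comm, mul_iSup', iSup_le_iff]
  exact forall_congr' fun i => by rw [mul_comm]

theorem swap_lemma {W X : Type u} (u : W → V) (p : W → X → V) (v : X → V) :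
    (⨅ w, qhom (u w) (⨅ x, qhom (p w x) (v x))) = ⨅ x, qhom (⨆ w, p w x * u w) (v x) := by
  apply eq_of_forall_le_iff
  intro t
  simp only [le_iInf_iff, le_qhom_iff]
  constructor
  · intro H x
    rw [iSup_mul_le_iff]
    intro w
    rw [mul_assoc]
    exact H w x
  · intro H w x
    rw [← mul_assoc]
    exact (iSup_mul_le_iff.mp (H x)) w

theorem isDist_fCostar {X Y : Type u} {a : VCatStr V X} {b : VCatStr V Y} {f : X → Y}
    (hf : IsVFunctor a b f) : IsDist b a (fCostar b f) :=
  ⟨fun y' y x => b.comp y' y (f x),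
   fun y x x' => le_trans (mul_mono_right' _ (hf x x')) (b.comp y (f x) (f x'))⟩

theorem isDist_fStar {X Y : Type u} {a : VCatStr V X} {b : VCatStr V Y} {f : X → Y}
    (hf : IsVFunctor a b f) : IsDist a b (fStar b f) :=
  ⟨fun x' x y => le_trans (mul_mono_left' (hf x' x) _) (b.comp (f x') (f x) y),
   fun x y y' => b.comp (f x) y y'⟩

theorem isDist_dComp {X Y Z : Type u} {a : VCatStr V X} {b : VCatStr V Y} {c : VCatStr V Z}
    {φ : X → Y → V} {ψ : Y → Z → V} (hφ : IsDist a b φ) (hψ : IsDist b c ψ) :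
    IsDist a c (dComp ψ φ) := by
  constructor
  · intro x' x z
    rw [dComp, mul_iSup']
    refine iSup_le fun y => le_trans ?_ (le_iSup (fun y => φ x' y * ψ y z) y)
    rw [← mul_assoc]
    exact mul_mono_left' (hφ.1 x' x y) _
  · intro x z z'
    rw [dComp, mul_comm _ (c.hom z z'), mul_iSup']
    refine iSup_le fun y => le_trans ?_ (le_iSup (fun y => φ x y * ψ y z') y)
    rw [mul_comm (c.hom z z'), mul_assoc]
    exact mul_mono_right' _ (hψ.2 y z z')

theorem yPhi_isVFunctor (Φ : DistClass V) (hΦ : DistAx Φ) {X : Type u} (a : VCatStr V X) :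
    IsVFunctor a (phiCat Φ a) (yPhi Φ hΦ a) := by
  intro x x'
  show a.hom x x' ≤ ⨅ x'', qhom (a.hom x'' x) (a.hom x'' x')
  exact le_iInf fun x'' => le_qhom_iff.mpr (a.comp x'' x x')

theorem yon (Φ : DistClass V) (hΦ : DistAx Φ) {X : Type u} (a : VCatStr V X)
    (x : X) (ψ : PhiCarrier Φ a) :
    (phiCat Φ a).hom (yPhi Φ hΦ a x) ψ = ψ.1 x := by
  apply le_antisymm
  · show (⨅ x', qhom (a.hom x' x) (ψ.1 x')) ≤ ψ.1 x
    refine le_trans (iInf_le _ x) ?_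
    calc qhom (a.hom x x) (ψ.1 x) = 1 * qhom (a.hom x x) (ψ.1 x) := (one_mul _).symm
      _ ≤ a.hom x x * qhom (a.hom x x) (ψ.1 x) := mul_mono_left' (a.refl x) _
      _ ≤ ψ.1 x := le_qhom_iff.mp le_rfl
  · show ψ.1 x ≤ ⨅ x', qhom (a.hom x' x) (ψ.1 x')
    exact le_iInf fun x' => le_qhom_iff.mpr (ψ.2.1 x' x)

theorem isDist_eval (Φ : DistClass V) {X : Type u} (a : VCatStr V X) :
    IsDist a (phiCat Φ a) (fun x ψ => ψ.1 x) := by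
  constructor
  · exact fun x' x ψ => ψ.2.1 x' x
  · intro x ψ ψ'
    show ψ.1 x * ((phiCat Φ a).hom ψ ψ') ≤ ψ'.1 x
    refine le_trans (mul_mono_right' _ ?_) (le_qhom_iff.mp (le_refl (qhom (ψ.1 x) (ψ'.1 x))))
    show (⨅ x', qhom (ψ.1 x') (ψ'.1 x')) ≤ qhom (ψ.1 x) (ψ'.1 x)
    exact iInf_le _ x

theorem phi_eval (Φ : DistClass V) (hΦ : DistAx Φ) {X : Type u} (a : VCatStr V X) :
    Φ a (phiCat Φ a) (fun x ψ => ψ.1 x) :=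
  hΦ.ax3 _ _ _ (isDist_eval Φ a) (fun ψ => ψ.2.2)

theorem fStar_yPhi (Φ : DistClass V) (hΦ : DistAx Φ) {X : Type u} (a : VCatStr V X) :
    fStar (phiCat Φ a) (yPhi Φ hΦ a) = fun x ψ => ψ.1 x :=
  funext fun x => funext fun ψ => yon Φ hΦ a x ψ

/-- Any `Φ`-cocontinuous functor out of `ΦX` is determined by its colimit formula. -/
theorem cocont_colim (Φ : DistClass V) (hΦ : DistAx Φ) {X Y : Type u}
    (a : VCatStr V X) (b : VCatStr V Y) (g : PhiCarrier Φ a → Y)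
    (hgc : PhiCocontinuous Φ (phiCat Φ a) b g)
    (ψ : PhiCarrier Φ a) (y : Y) :
    b.hom (g ψ) y = ⨅ x, qhom (ψ.1 x) (b.hom (g (yPhi Φ hΦ a x)) y) := by
  have hcl : IsColimit a (unitCat V) (phiCat Φ a) (fun x (_ : PUnit) => ψ.1 x)
      (yPhi Φ hΦ a) (fun _ => ψ) := by
    intro _ χ
    have : (⨅ x, qhom (ψ.1 x) ((phiCat Φ a).hom (yPhi Φ hΦ a x) χ)) =
        ⨅ x, qhom (ψ.1 x) (χ.1 x) := iInf_congr fun x => by rw [yon]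
    rw [this]
    rfl
  have hc := hgc a (unitCat V) (fun x (_ : PUnit) => ψ.1 x) (yPhi Φ hΦ a) (fun _ => ψ)
      ⟨fun x' x _ => ψ.2.1 x' x, fun x _ _ => (mul_one _).le⟩ ψ.2.2
      (yPhi_isVFunctor Φ hΦ a) (fun _ _ => (phiCat Φ a).refl ψ) hcl
  exact hc PUnit.unit y

/-- Composition with `y^Φ_X` is an equivalence of ordered sets between
`Φ`-cocontinuous functors `ΦX → Y` and functors `X → Y`, for `Y` `Φ`-cocomplete. -/
theorem stmt16 (Φ : DistClass V) (hΦ : DistAx Φ) {X Y : Type u}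
    (a : VCatStr V X) (b : VCatStr V Y) (hYc : PhiCocomplete Φ b) :
    (∀ f : X → Y, IsVFunctor a b f →
      ∃ g : PhiCarrier Φ a → Y, IsVFunctor (phiCat Φ a) b g ∧
        PhiCocontinuous Φ (phiCat Φ a) b g ∧ VEquiv b (g ∘ yPhi Φ hΦ a) f) ∧
    (∀ g g' : PhiCarrier Φ a → Y,
      IsVFunctor (phiCat Φ a) b g → IsVFunctor (phiCat Φ a) b g' →
      PhiCocontinuous Φ (phiCat Φ a) b g → PhiCocontinuous Φ (phiCat Φ a) b g' →
      (VLe b g g' ↔ VLe b (g ∘ yPhi Φ hΦ a) (g' ∘ yPhi Φ hΦ a))) := by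
  constructor
  · -- Part (a)
    intro f hf
    obtain ⟨g, hg, hcol⟩ := hYc a (phiCat Φ a) (fun x ψ => ψ.1 x) f
      (isDist_eval Φ a) (phi_eval Φ hΦ a) hf
    refine ⟨g, hg, ?_, ?_, ?_⟩
    · -- Φ-cocontinuity of g
      intro W Z d c φ h ℓ hφd hφΦ hh hℓ hℓcol
      intro z y
      set Ψz : X → V := fun x => ⨆ w, (h w).1 x * φ w z with hΨz
      -- Ψz is a presheaf
      have hpre : IsPresheaf a Ψz := by
        intro x' x
        rw [hΨz]
        rw [mul_iSup']
        refine iSup_le fun w => le_trans ?_ (le_iSup (fun w => (h w).1 x' * φ w z) w)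
        rw [← mul_assoc]
        exact mul_mono_left' ((h w).2.1 x' x) _
      -- the distributor Θ = φ ∘ h^* : ΦX ⇸ Z
      set Θ : PhiCarrier Φ a → Z → V := dComp φ (fCostar (phiCat Φ a) h) with hΘ
      have hΘΦ : Φ (phiCat Φ a) c Θ := hΦ.ax2_right d (phiCat Φ a) c φ h hφd hh hφΦ
      have hΘd : IsDist (phiCat Φ a) c Θ := isDist_dComp (isDist_fCostar hh) hφd
      -- the distributor Ψ = Θ ∘ y_* : X ⇸ Z
      set Ψ : X → Z → V := dComp Θ (fun x ψ => ψ.1 x) with hΨ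
      have hΨΦ : Φ a c Ψ := by
        have := hΦ.ax2_star a (phiCat Φ a) c Θ (yPhi Φ hΦ a) hΘd
          (yPhi_isVFunctor Φ hΦ a) hΘΦ
          (by rw [fStar_yPhi]; exact phi_eval Φ hΦ a)
        rwa [fStar_yPhi] at this
      have hΨd : IsDist a c Ψ := isDist_dComp (isDist_eval Φ a) hΘd
      -- Ψ evaluates to the composite formula
      have hΨeq : ∀ (x : X) (z' : Z), Ψ x z' = ⨆ w, (h w).1 x * φ w z' := by
        intro x z'
        apply le_antisymm
        · refine iSup_le fun ψ => ?_
          show ψ.1 x * Θ ψ z' ≤ _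
          rw [hΘ]
          show ψ.1 x * ⨆ w, (phiCat Φ a).hom ψ (h w) * φ w z' ≤ _
          rw [mul_iSup']
          refine iSup_le fun w => le_trans ?_ (le_iSup (fun w => (h w).1 x * φ w z') w)
          rw [← mul_assoc]
          refine mul_mono_left' ?_ _
          refine le_trans (mul_mono_right' _ ?_) (le_qhom_iff.mp (le_refl (qhom (ψ.1 x) ((h w).1 x))))
          show (⨅ x', qhom (ψ.1 x') ((h w).1 x')) ≤ _
          exact iInf_le _ x
        · refine iSup_le fun w => ?_
          refine le_trans ?_ (le_iSup (fun ψ : PhiCarrier Φ a => ψ.1 x * Θ ψ z') (h w))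
          refine mul_mono_right' _ ?_
          refine le_trans ?_ (le_iSup (fun w' => (phiCat Φ a).hom (h w) (h w') * φ w' z') w)
          calc φ w z' = 1 * φ w z' := (one_mul _).symm
            _ ≤ (phiCat Φ a).hom (h w) (h w) * φ w z' :=
              mul_mono_left' ((phiCat Φ a).refl (h w)) _
      -- Ψz lies in Φ
      have hin : InPhi Φ a Ψz := by
        have hcz : IsVFunctor (unitCat V) c (fun _ : PUnit => z) := fun _ _ => c.refl z
        have hcolumn := hΦ.ax2_left a (unitCat V) c Ψ (fun _ : PUnit => z) hΨd hcz hΨΦ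
        have heq2 : dComp (fCostar c (fun _ : PUnit => z)) Ψ = fun x (_ : PUnit) => Ψz x := by
          funext x u
          show (⨆ z', Ψ x z' * c.hom z' z) = Ψz x
          apply le_antisymm
          · refine iSup_le fun z' => ?_
            have h1 : Ψ x z' * c.hom z' z ≤ Ψ x z := hΨd.2 x z' z
            rw [hΨeq x z] at h1
            exact h1
          · have h1 : Ψz x = Ψ x z := (hΨeq x z).symm
            rw [h1]
            refine le_trans ?_ (le_iSup (fun z' => Ψ x z' * c.hom z' z) z)
            calc Ψ x z = Ψ x z * 1 := (mul_one _).symm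
              _ ≤ Ψ x z * c.hom z z := mul_mono_right' _ (c.refl z)
        show Φ a (unitCat V) fun x (_ : PUnit) => Ψz x
        rw [← heq2]
        exact hcolumn
      set ψz : PhiCarrier Φ a := ⟨Ψz, hpre, hin⟩ with hψz
      -- (ℓ z).1 = Ψz
      have hℓeq : (ℓ z).1 = Ψz := by
        funext x
        apply le_antisymm
        · -- ℓ z ≤ ψz from colimit property applied to ψz
          have h1 := hℓcol z ψz
          have h2 : (1 : V) ≤ ⨅ w, qhom (φ w z) ((phiCat Φ a).hom (h w) ψz) := by
            refine le_iInf fun w => le_qhom_iff.mpr ?_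
            rw [mul_one]
            show φ w z ≤ ⨅ x', qhom ((h w).1 x') (Ψz x')
            refine le_iInf fun x' => le_qhom_iff.mpr ?_
            exact le_iSup (fun w => (h w).1 x' * φ w z) w
          rw [← h1] at h2
          have h3 : (1 : V) ≤ ⨅ x', qhom ((ℓ z).1 x') (Ψz x') := h2
          have h4 := le_qhom_iff.mp (le_trans h3 (iInf_le _ x))
          rwa [mul_one] at h4
        · -- ψz ≤ ℓ z from reflexivity and colimit property
          have h1 := hℓcol z (ℓ z)
          have h2 : (1 : V) ≤ (phiCat Φ a).hom (ℓ z) (ℓ z) := (phiCat Φ a).refl _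
          rw [h1] at h2
          rw [hΨz]
          refine iSup_le fun w => ?_
          have h3 : φ w z ≤ (phiCat Φ a).hom (h w) (ℓ z) := by
            have h4 := le_qhom_iff.mp (le_trans h2 (iInf_le _ w))
            rwa [mul_one] at h4
          have h5 : (phiCat Φ a).hom (h w) (ℓ z) ≤ qhom ((h w).1 x) ((ℓ z).1 x) := iInf_le _ x
          have h6 : (h w).1 x * φ w z ≤ (h w).1 x * qhom ((h w).1 x) ((ℓ z).1 x) :=
            mul_mono_right' _ (le_trans h3 h5)
          exact le_trans h6 (le_qhom_iff.mp (le_refl (qhom ((h w).1 x) ((ℓ z).1 x))))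
      -- conclude
      show b.hom (g (ℓ z)) y = ⨅ w, qhom (φ w z) (b.hom (g (h w)) y)
      calc b.hom (g (ℓ z)) y = ⨅ x, qhom ((ℓ z).1 x) (b.hom (f x) y) := hcol (ℓ z) y
        _ = ⨅ x, qhom (Ψz x) (b.hom (f x) y) := by rw [hℓeq]
        _ = ⨅ w, qhom (φ w z) (⨅ x, qhom ((h w).1 x) (b.hom (f x) y)) :=
            (swap_lemma (fun w => φ w z) (fun w x => (h w).1 x) (fun x => b.hom (f x) y)).symm
        _ = ⨅ w, qhom (φ w z) (b.hom (g (h w)) y) := iInf_congr fun w => by rw [← hcol (h w) y]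
    · -- g ∘ y ≤ f
      intro x
      show (1 : V) ≤ b.hom (g (yPhi Φ hΦ a x)) (f x)
      rw [hcol (yPhi Φ hΦ a x) (f x)]
      refine le_iInf fun x' => le_qhom_iff.mpr ?_
      rw [mul_one]
      exact hf x' x
    · -- f ≤ g ∘ y
      intro x
      show (1 : V) ≤ b.hom (f x) (g (yPhi Φ hΦ a x))
      have h1 : (1 : V) ≤ b.hom (g (yPhi Φ hΦ a x)) (g (yPhi Φ hΦ a x)) := b.refl _
      rw [hcol (yPhi Φ hΦ a x) (g (yPhi Φ hΦ a x))] at h1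
      have h2 := le_qhom_iff.mp (le_trans h1 (iInf_le _ x))
      rw [mul_one] at h2
      exact le_trans (a.refl x) h2
  · -- Part (b)
    intro g g' hg hg' hgc hg'c
    constructor
    · intro hle x
      exact hle (yPhi Φ hΦ a x)
    · intro hle ψ
      rw [cocont_colim Φ hΦ a b g hgc ψ (g' ψ)]
      have h2 : (1 : V) ≤ b.hom (g' ψ) (g' ψ) := b.refl _
      rw [cocont_colim Φ hΦ a b g' hg'c ψ (g' ψ)] at h2
      refine le_iInf fun x => le_qhom_iff.mpr ?_
      rw [mul_one]
      have h3 : ψ.1 x ≤ b.hom (g' (yPhi Φ hΦ a x)) (g' ψ) := by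
        have h4 := le_qhom_iff.mp (le_trans h2 (iInf_le _ x))
        rwa [mul_one] at h4
      calc ψ.1 x = 1 * ψ.1 x := (one_mul _).symm
        _ ≤ b.hom (g (yPhi Φ hΦ a x)) (g' (yPhi Φ hΦ a x)) *
            b.hom (g' (yPhi Φ hΦ a x)) (g' ψ) := mul_le_mul'' (hle x) h3
        _ ≤ b.hom (g (yPhi Φ hΦ a x)) (g' ψ) := b.comp _ _ _
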